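/- arXiv:1012.5265 — 3 statements merged into one kernel-verified Lean document; each statement's English description precedes it below -/
import Mathlib

section
/- Let λ be a Young diagram with n boxes, first-column length μ₁, and column lengths μ₁ ≥ μ₂ ≥ ... ≥ μ_r. For a filling T of λ, the adjacent-pair matrix N_T is in highest form if and only if T satisfies: (a) the leftmost column of T is filled with the integers {1,...,μ₁}; and (b) whenever (i₁,j₁) and (i₂,j₂) are both adjacent pairs in T (with i left of j in each), then i₁ < i₂ if and only if j₁ < j₂. -/
/-- A filling of `μ` by `{1, ..., μ.card}`. -/
def IsFilling (μ : YoungDiagram) (T : ℕ × ℕ → ℕ) : Prop :=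
  Set.BijOn T (↑μ.cells) (Set.Icc 1 μ.card)

/-- `i` is directly left-adjacent to `j` in the filling `T`. -/
def Adjacent (μ : YoungDiagram) (T : ℕ × ℕ → ℕ) (i j : ℕ) : Prop :=
  ∃ r c, (r, c) ∈ μ ∧ (r, c + 1) ∈ μ ∧ T (r, c) = i ∧ T (r, c + 1) = j

open Classical in
/-- The adjacent-pair matrix of `T` (indices one-indexed via `Fin μ.card`). -/
noncomputable def adjPairMatrix (μ : YoungDiagram) (T : ℕ × ℕ → ℕ) :
    Matrix (Fin μ.card) (Fin μ.card) ℂ :=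
  Matrix.of fun i j => if Adjacent μ T ((i : ℕ) + 1) ((j : ℕ) + 1) then 1 else 0

/-- `X i k` is a pivot of `X`. -/
def IsPivot {n : ℕ} (X : Matrix (Fin n) (Fin n) ℂ) (i k : Fin n) : Prop :=
  X i k ≠ 0 ∧ (∀ j, j < k → X i j = 0) ∧ (∀ j, i < j → X j k = 0)

open Classical in
/-- `r_j`: the (one-indexed) row of the pivot in column `j` if it exists, `0` otherwise. -/
noncomputable def pivotRow {n : ℕ} (X : Matrix (Fin n) (Fin n) ℂ) (j : Fin n) : ℕ :=
  if h : ∃ i, IsPivot X i j then (h.choose : ℕ) + 1 else 0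

/-- An (strictly) upper-triangular nilpotent matrix is in highest form if its pivot rows
form a nondecreasing sequence `r₁ ≤ r₂ ≤ ⋯ ≤ r_n`. -/
def IsHighestForm {n : ℕ} (X : Matrix (Fin n) (Fin n) ℂ) : Prop :=
  (∀ i j : Fin n, j ≤ i → X i j = 0) ∧ Monotone (pivotRow X)

namespace Stmt3Aux

variable {μ : YoungDiagram} {T : ℕ × ℕ → ℕ}

lemma mem_cells_coe {x : ℕ × ℕ} (hx : x ∈ μ) : x ∈ (↑μ.cells : Set (ℕ × ℕ)) := by
  simpa using hx

lemma val_mem (hT : IsFilling μ T) {x : ℕ × ℕ} (hx : x ∈ μ) :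
    1 ≤ T x ∧ T x ≤ μ.card := hT.mapsTo (mem_cells_coe hx)

lemma adj_bounds (hT : IsFilling μ T) {a b : ℕ} (h : Adjacent μ T a b) :
    1 ≤ a ∧ a ≤ μ.card ∧ 1 ≤ b ∧ b ≤ μ.card := by
  obtain ⟨r, c, h1, h2, h3, h4⟩ := h
  have ha := val_mem hT h1
  have hb := val_mem hT h2
  rw [h3] at ha; rw [h4] at hb
  exact ⟨ha.1, ha.2, hb.1, hb.2⟩

lemma adj_ne (hT : IsFilling μ T) {a b : ℕ} (h : Adjacent μ T a b) : a ≠ b := by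
  obtain ⟨r, c, h1, h2, h3, h4⟩ := h
  intro hab
  have heq : (r, c) = (r, c + 1) :=
    hT.injOn (mem_cells_coe h1) (mem_cells_coe h2) (by rw [h3, h4, hab])
  have := congrArg Prod.snd heq
  simp at this

lemma adj_left_unique (hT : IsFilling μ T) {a a' b : ℕ}
    (h : Adjacent μ T a b) (h' : Adjacent μ T a' b) : a = a' := by
  obtain ⟨r, c, h1, h2, h3, h4⟩ := h
  obtain ⟨r', c', h1', h2', h3', h4'⟩ := h'
  have heq : (r, c + 1) = (r', c' + 1) :=
    hT.injOn (mem_cells_coe h2) (mem_cells_coe h2') (by rw [h4, h4'])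
  have hr : r = r' := congrArg Prod.fst heq
  have hc : c = c' := by have := congrArg Prod.snd heq; simpa using this
  rw [← h3, ← h3', hr, hc]

lemma adj_right_unique (hT : IsFilling μ T) {a b b' : ℕ}
    (h : Adjacent μ T a b) (h' : Adjacent μ T a b') : b = b' := by
  obtain ⟨r, c, h1, h2, h3, h4⟩ := h
  obtain ⟨r', c', h1', h2', h3', h4'⟩ := h'
  have heq : (r, c) = (r', c') :=
    hT.injOn (mem_cells_coe h1) (mem_cells_coe h1') (by rw [h3, h3'])
  have hr : r = r' := congrArg Prod.fst heq
  have hc : c = c' := congrArg Prod.snd heq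
  rw [← h4, ← h4', hr, hc]

open Classical in
/-- The value directly to the left of `v` in the filling, or `0` if none. -/
noncomputable def leftVal (μ : YoungDiagram) (T : ℕ × ℕ → ℕ) (v : ℕ) : ℕ :=
  if h : ∃ a, Adjacent μ T a v then h.choose else 0

lemma leftVal_eq (hT : IsFilling μ T) {a v : ℕ} (h : Adjacent μ T a v) :
    leftVal μ T v = a := by
  have he : ∃ a, Adjacent μ T a v := ⟨a, h⟩
  unfold leftVal
  rw [dif_pos he]
  exact adj_left_unique hT he.choose_spec h

lemma leftVal_eq_zero {v : ℕ} (h : ¬ ∃ a, Adjacent μ T a v) : leftVal μ T v = 0 := by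
  unfold leftVal
  exact dif_neg h

lemma adj_of_leftVal_ne {v : ℕ} (h : leftVal μ T v ≠ 0) :
    Adjacent μ T (leftVal μ T v) v := by
  by_cases he : ∃ a, Adjacent μ T a v
  · have : leftVal μ T v = he.choose := by unfold leftVal; rw [dif_pos he]
    rw [this]
    exact he.choose_spec
  · exact absurd (leftVal_eq_zero he) h

lemma leftVal_eq_zero_iff (hT : IsFilling μ T) {v : ℕ} :
    leftVal μ T v = 0 ↔ ¬ ∃ a, Adjacent μ T a v := by
  constructor
  · intro h
    rintro ⟨a, ha⟩
    have h1 := leftVal_eq hT ha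
    have h2 := (adj_bounds hT ha).1
    omega
  · exact leftVal_eq_zero

lemma no_adj_col0 (hT : IsFilling μ T) {r : ℕ} (h : (r, 0) ∈ μ) :
    ¬ ∃ a, Adjacent μ T a (T (r, 0)) := by
  rintro ⟨a, r', c', h1, h2, h3, h4⟩
  have heq : (r', c' + 1) = (r, 0) :=
    hT.injOn (mem_cells_coe h2) (mem_cells_coe h) h4
  have := congrArg Prod.snd heq
  simp at this

lemma exists_col0 (hT : IsFilling μ T) {v : ℕ} (h1 : 1 ≤ v) (h2 : v ≤ μ.card)
    (h0 : ¬ ∃ a, Adjacent μ T a v) : ∃ r, (r, 0) ∈ μ ∧ T (r, 0) = v := by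
  obtain ⟨x, hx, hxv⟩ := hT.surjOn (Set.mem_Icc.2 ⟨h1, h2⟩)
  obtain ⟨r, c⟩ := x
  have hxμ : (r, c) ∈ μ := by simpa using hx
  match c, hxμ, hxv with
  | 0, hxμ, hxv => exact ⟨r, hxμ, hxv⟩
  | c + 1, hxμ, hxv =>
    exfalso
    have hl : (r, c) ∈ μ := μ.up_left_mem le_rfl (Nat.le_succ c) hxμ
    exact h0 ⟨T (r, c), r, c, hl, hxμ, rfl, hxv⟩

lemma entry_ne_iff (i j : Fin μ.card) :
    adjPairMatrix μ T i j ≠ 0 ↔ Adjacent μ T ((i : ℕ) + 1) ((j : ℕ) + 1) := by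
  by_cases h : Adjacent μ T ((i : ℕ) + 1) ((j : ℕ) + 1) <;>
    simp [adjPairMatrix, h]

lemma isPivot_iff (hT : IsFilling μ T) (i k : Fin μ.card) :
    IsPivot (adjPairMatrix μ T) i k ↔ Adjacent μ T ((i : ℕ) + 1) ((k : ℕ) + 1) := by
  constructor
  · rintro ⟨h1, -, -⟩
    exact (entry_ne_iff i k).1 h1
  · intro h
    refine ⟨(entry_ne_iff i k).2 h, ?_, ?_⟩
    · intro j hj
      by_contra hne
      have h' := (entry_ne_iff i j).1 hne
      have heq := adj_right_unique hT h h'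
      have hj' : (j : ℕ) < k := hj
      omega
    · intro j hj
      by_contra hne
      have h' := (entry_ne_iff j k).1 hne
      have heq := adj_left_unique hT h h'
      have hj' : (i : ℕ) < j := hj
      omega

lemma pivotRow_eq (hT : IsFilling μ T) (k : Fin μ.card) :
    pivotRow (adjPairMatrix μ T) k = leftVal μ T ((k : ℕ) + 1) := by
  unfold pivotRow
  split
  case isTrue h =>
    exact (leftVal_eq hT ((isPivot_iff hT _ k).1 h.choose_spec)).symm
  case isFalse h =>
    by_contra hne
    have hne' : leftVal μ T ((k : ℕ) + 1) ≠ 0 := fun hz => hne hz.symm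
    have hadj := adj_of_leftVal_ne hne'
    obtain ⟨ha1, ha2, -, -⟩ := adj_bounds hT hadj
    set a := leftVal μ T ((k : ℕ) + 1) with haa
    refine h ⟨⟨a - 1, by omega⟩, (isPivot_iff hT _ k).2 ?_⟩
    have : ((⟨a - 1, by omega⟩ : Fin μ.card) : ℕ) + 1 = a := by
      show a - 1 + 1 = a; omega
    rw [this]
    exact hadj

lemma card_zero (hT : IsFilling μ T) :
    ((Finset.Icc 1 μ.card).filter (fun v => leftVal μ T v = 0)).card = μ.colLen 0 := by
  rw [← Finset.card_range (μ.colLen 0)]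
  refine (Finset.card_bij (fun r _ => T (r, 0)) ?_ ?_ ?_).symm
  · intro r hr
    have hrμ : (r, 0) ∈ μ := YoungDiagram.mem_iff_lt_colLen.2 (Finset.mem_range.1 hr)
    have hv := val_mem hT hrμ
    exact Finset.mem_filter.2 ⟨Finset.mem_Icc.2 ⟨hv.1, hv.2⟩,
      leftVal_eq_zero (no_adj_col0 hT hrμ)⟩
  · intro r hr r' hr' heq
    have hrμ : (r, 0) ∈ μ := YoungDiagram.mem_iff_lt_colLen.2 (Finset.mem_range.1 hr)
    have hrμ' : (r', 0) ∈ μ := YoungDiagram.mem_iff_lt_colLen.2 (Finset.mem_range.1 hr')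
    have := hT.injOn (mem_cells_coe hrμ) (mem_cells_coe hrμ') heq
    exact congrArg Prod.fst this
  · intro v hv
    obtain ⟨hvI, hv0⟩ := Finset.mem_filter.1 hv
    rw [Finset.mem_Icc] at hvI
    obtain ⟨r, hrμ, hrv⟩ := exists_col0 hT hvI.1 hvI.2 ((leftVal_eq_zero_iff hT).1 hv0)
    exact ⟨r, Finset.mem_range.2 (YoungDiagram.mem_iff_lt_colLen.1 hrμ), hrv⟩

end Stmt3Aux

open Stmt3Aux in
/-- the adjacent-pair matrix of a filling `T` of `μ` is in highest form iff
(a) the leftmost column of `T` is filled with `{1, ..., μ₁}` (μ₁ the first column length),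
and (b) for adjacent pairs `(i₁,j₁)`, `(i₂,j₂)` of `T`, `i₁ < i₂ ↔ j₁ < j₂`. -/
theorem stmt3 (μ : YoungDiagram) (T : ℕ × ℕ → ℕ) (hT : IsFilling μ T) :
    IsHighestForm (adjPairMatrix μ T) ↔
      (((∀ r, (r, 0) ∈ μ → T (r, 0) ∈ Finset.Icc 1 (μ.colLen 0)) ∧
          ∀ v ∈ Finset.Icc 1 (μ.colLen 0), ∃ r, (r, 0) ∈ μ ∧ T (r, 0) = v) ∧
        ∀ i₁ j₁ i₂ j₂, Adjacent μ T i₁ j₁ → Adjacent μ T i₂ j₂ → (i₁ < i₂ ↔ j₁ < j₂)) := by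
  constructor
  · rintro ⟨htri, hmono⟩
    have key : ∀ {i₁ j₁ i₂ j₂ : ℕ}, Adjacent μ T i₁ j₁ → Adjacent μ T i₂ j₂ →
        j₁ < j₂ → i₁ < i₂ := by
      intro i₁ j₁ i₂ j₂ h1 h2 hlt
      obtain ⟨hi₁, hi₁', hj₁, hj₁'⟩ := adj_bounds hT h1
      obtain ⟨hi₂, hi₂', hj₂, hj₂'⟩ := adj_bounds hT h2
      have ha : pivotRow (adjPairMatrix μ T) ⟨j₁ - 1, by omega⟩ = i₁ := by
        rw [pivotRow_eq hT]
        have e : ((⟨j₁ - 1, by omega⟩ : Fin μ.card) : ℕ) + 1 = j₁ := by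
          show j₁ - 1 + 1 = j₁; omega
        rw [e]; exact leftVal_eq hT h1
      have hb : pivotRow (adjPairMatrix μ T) ⟨j₂ - 1, by omega⟩ = i₂ := by
        rw [pivotRow_eq hT]
        have e : ((⟨j₂ - 1, by omega⟩ : Fin μ.card) : ℕ) + 1 = j₂ := by
          show j₂ - 1 + 1 = j₂; omega
        rw [e]; exact leftVal_eq hT h2
      have hle : i₁ ≤ i₂ := by
        rw [← ha, ← hb]
        exact hmono (by simp only [Fin.mk_le_mk]; omega)
      rcases lt_or_eq_of_le hle with h | h
      · exact h
      · exact absurd (adj_right_unique hT (h ▸ h1) h2) (by omega)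
    have hbcond : ∀ i₁ j₁ i₂ j₂, Adjacent μ T i₁ j₁ → Adjacent μ T i₂ j₂ →
        (i₁ < i₂ ↔ j₁ < j₂) := by
      intro i₁ j₁ i₂ j₂ h1 h2
      constructor
      · intro h
        rcases Nat.lt_trichotomy j₁ j₂ with hj | hj | hj
        · exact hj
        · exact absurd (adj_left_unique hT (hj ▸ h1) h2) (by omega)
        · exact absurd (key h2 h1 hj) (by omega)
      · exact key h1 h2
    set Z := (Finset.Icc 1 μ.card).filter (fun v => leftVal μ T v = 0) with hZ
    have hcard : Z.card = μ.colLen 0 := card_zero hT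
    have hdown : ∀ v ∈ Z, ∀ w, 1 ≤ w → w ≤ v → w ∈ Z := by
      intro v hv w hw1 hwv
      rw [hZ, Finset.mem_filter] at hv ⊢
      obtain ⟨hvI, hv0⟩ := hv
      rw [Finset.mem_Icc] at hvI
      refine ⟨Finset.mem_Icc.2 ⟨hw1, le_trans hwv hvI.2⟩, ?_⟩
      have hmm := hmono (a := ⟨w - 1, by omega⟩) (b := ⟨v - 1, by omega⟩)
        (by simp only [Fin.mk_le_mk]; omega)
      rw [pivotRow_eq hT, pivotRow_eq hT] at hmm
      have e1 : ((⟨w - 1, by omega⟩ : Fin μ.card) : ℕ) + 1 = w := by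
        show w - 1 + 1 = w; omega
      have e2 : ((⟨v - 1, by omega⟩ : Fin μ.card) : ℕ) + 1 = v := by
        show v - 1 + 1 = v; omega
      rw [e1, e2, hv0] at hmm
      omega
    have hsub : Z ⊆ Finset.Icc 1 (μ.colLen 0) := by
      intro v hv
      have hv1 : 1 ≤ v := (Finset.mem_Icc.1 (Finset.mem_filter.1 hv).1).1
      have hss : Finset.Icc 1 v ⊆ Z := fun w hw =>
        hdown v hv w (Finset.mem_Icc.1 hw).1 (Finset.mem_Icc.1 hw).2
      have hcle := Finset.card_le_card hss
      rw [Nat.card_Icc, hcard] at hcle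
      rw [Finset.mem_Icc]
      omega
    have hZeq : Z = Finset.Icc 1 (μ.colLen 0) :=
      Finset.eq_of_subset_of_card_le hsub (by rw [Nat.card_Icc, hcard]; omega)
    refine ⟨⟨?_, ?_⟩, hbcond⟩
    · intro r hr
      have hv := val_mem hT hr
      have hz : T (r, 0) ∈ Z := Finset.mem_filter.2
        ⟨Finset.mem_Icc.2 ⟨hv.1, hv.2⟩, leftVal_eq_zero (no_adj_col0 hT hr)⟩
      rwa [hZeq] at hz
    · intro v hv
      rw [← hZeq] at hv
      obtain ⟨hvI, hv0⟩ := Finset.mem_filter.1 hv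
      rw [Finset.mem_Icc] at hvI
      exact exists_col0 hT hvI.1 hvI.2 ((leftVal_eq_zero_iff hT).1 hv0)
  · rintro ⟨⟨ha1, ha2⟩, hb⟩
    have hD : ∀ v, 1 ≤ v → v ≤ μ.card → ((∃ a, Adjacent μ T a v) ↔ μ.colLen 0 < v) := by
      intro v h1 h2
      constructor
      · intro he
        by_contra hle
        push_neg at hle
        obtain ⟨r, hr, hrv⟩ := ha2 v (Finset.mem_Icc.2 ⟨h1, hle⟩)
        exact no_adj_col0 hT hr (hrv ▸ he)
      · intro hgt
        by_contra hne
        obtain ⟨r, hr, hrv⟩ := exists_col0 hT h1 h2 hne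
        have hmem := ha1 r hr
        rw [hrv, Finset.mem_Icc] at hmem
        omega
    have hlt : ∀ v w, μ.colLen 0 < v → v < w → w ≤ μ.card →
        leftVal μ T v < leftVal μ T w := by
      intro v w hv hvw hw
      obtain ⟨a, ha⟩ := (hD v (by omega) (by omega)).2 hv
      obtain ⟨b, hbw⟩ := (hD w (by omega) hw).2 (by omega)
      rw [leftVal_eq hT ha, leftVal_eq hT hbw]
      exact (hb a v b w ha hbw).2 hvw
    have hadj_lt : ∀ a b, Adjacent μ T a b → a < b := by
      intro a b hab
      by_contra hle
      push_neg at hle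
      obtain ⟨ha1', ha2', hb1', hb2'⟩ := adj_bounds hT hab
      have hbD : μ.colLen 0 < b := (hD b hb1' hb2').1 ⟨a, hab⟩
      have claim : ∀ k, b + k ≤ μ.card → b + k ≤ leftVal μ T (b + k) := by
        intro k
        induction k with
        | zero =>
          intro _
          simp only [Nat.add_zero]
          have := leftVal_eq hT hab
          omega
        | succ k ih =>
          intro hk
          have h1 := ih (by omega)
          have h2 := hlt (b + k) (b + (k + 1)) (by omega) (by omega) (by omega)
          omega
      have hn := claim (μ.card - b) (by omega)
      have hbn : b + (μ.card - b) = μ.card := by omega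
      rw [hbn] at hn
      obtain ⟨c, hc⟩ := (hD μ.card (by omega) le_rfl).2 (by omega)
      have hlc := leftVal_eq hT hc
      have hcb := (adj_bounds hT hc).2.1
      have hcn : c = μ.card := by omega
      exact adj_ne hT hc (by omega)
    constructor
    · intro i j hji
      by_contra hne
      have h := hadj_lt _ _ ((entry_ne_iff i j).1 hne)
      have hji' : (j : ℕ) ≤ i := hji
      omega
    · intro i j hij
      have hi := i.isLt
      have hj := j.isLt
      rw [pivotRow_eq hT, pivotRow_eq hT]
      by_cases h0 : leftVal μ T ((i : ℕ) + 1) = 0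
      · rw [h0]; exact Nat.zero_le _
      · have hadj := adj_of_leftVal_ne h0
        have hiD : μ.colLen 0 < (i : ℕ) + 1 :=
          (hD _ (by omega) (by omega)).1 ⟨_, hadj⟩
        rcases eq_or_lt_of_le hij with he | hlt'
        · exact le_of_eq (by rw [he])
        · have hlt'' : (i : ℕ) < j := hlt'
          have := hlt ((i : ℕ) + 1) ((j : ℕ) + 1) hiD (by omega) (by omega)
          omega
end

section
/- Let λ be a Young diagram with n boxes and column lengths μ₁ ≥ μ₂ ≥ ... ≥ μ_r. If a filling T of λ satisfies conditions (a) the first column is filled with {1,...,μ₁}, and (b) for adjacent pairs (i₁,j₁), (i₂,j₂) one has i₁ < i₂ iff j₁ < j₂, then for each 1 ≤ s ≤ r, the s-th column of T contains precisely the integers from (μ₁+...+μ_{s-1})+1 to μ₁+...+μ_s. -/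
private lemma aux_locate (f : ℕ → ℕ) : ∀ (m v : ℕ), 0 < v →
    v ≤ ∑ t ∈ Finset.range m, f t →
    ∃ s < m, (∑ t ∈ Finset.range s, f t) < v ∧ v ≤ ∑ t ∈ Finset.range (s + 1), f t := by
  intro m
  induction m with
  | zero => intro v hv h; simp at h; omega
  | succ m ih =>
    intro v hv h
    by_cases h' : v ≤ ∑ t ∈ Finset.range m, f t
    · obtain ⟨s, hs, h1, h2⟩ := ih v hv h'
      exact ⟨s, Nat.lt_succ_of_lt hs, h1, h2⟩
    · exact ⟨m, Nat.lt_succ_self m, by omega, h⟩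

private lemma aux_initial (A : Finset ℕ) (a n : ℕ) (hsub : A ⊆ Finset.Ioc a n)
    (hdc : ∀ v ∈ A, ∀ w, a < w → w ≤ v → w ∈ A) : A = Finset.Ioc a (a + A.card) := by
  rcases A.eq_empty_or_nonempty with h | h
  · subst h; simp
  · set M := A.max' h with hMdef
    have hM : M ∈ A := A.max'_mem h
    have hMa : a < M := (Finset.mem_Ioc.mp (hsub hM)).1
    have hA : A = Finset.Ioc a M := by
      ext w
      simp only [Finset.mem_Ioc]
      constructor
      · intro hw
        exact ⟨(Finset.mem_Ioc.mp (hsub hw)).1, A.le_max' w hw⟩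
      · intro hw
        exact hdc _ hM w hw.1 hw.2
    have hc : A.card = M - a := by rw [hA, Nat.card_Ioc]
    rw [hA, Nat.card_Ioc]
    congr 1
    omega

/-- if a filling `T` of `μ` satisfies (a) its first column is filled with
`{1, ..., μ₁}` and (b) for adjacent pairs `(i₁,j₁)`, `(i₂,j₂)` one has `i₁ < i₂ ↔ j₁ < j₂`,
then for each column `s`, the `s`-th column of `T` contains precisely the integers from
`μ₁ + ⋯ + μ_{s-1} + 1` to `μ₁ + ⋯ + μ_s` (where `μ_t` are the column lengths of `μ`). -/
theorem stmt4 (μ : YoungDiagram) (T : ℕ × ℕ → ℕ) (hT : IsFilling μ T)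
    (ha : (∀ r, (r, 0) ∈ μ → T (r, 0) ∈ Finset.Icc 1 (μ.colLen 0)) ∧
      ∀ v ∈ Finset.Icc 1 (μ.colLen 0), ∃ r, (r, 0) ∈ μ ∧ T (r, 0) = v)
    (hb : ∀ i₁ j₁ i₂ j₂, Adjacent μ T i₁ j₁ → Adjacent μ T i₂ j₂ → (i₁ < i₂ ↔ j₁ < j₂)) :
    (∀ r s, (r, s) ∈ μ →
        T (r, s) ∈ Finset.Ioc (∑ t ∈ Finset.range s, μ.colLen t)
          (∑ t ∈ Finset.range (s + 1), μ.colLen t)) ∧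
      ∀ s v, v ∈ Finset.Ioc (∑ t ∈ Finset.range s, μ.colLen t)
          (∑ t ∈ Finset.range (s + 1), μ.colLen t) →
        ∃ r, (r, s) ∈ μ ∧ T (r, s) = v := by
  obtain ⟨hmap, hinj, hsurj⟩ := hT
  have hmem : ∀ p : ℕ × ℕ, p ∈ μ → 1 ≤ T p ∧ T p ≤ μ.card := by
    intro p hp
    have := hmap (by simpa using hp)
    simpa using this
  have hinj' : ∀ p q : ℕ × ℕ, p ∈ μ → q ∈ μ → T p = T q → p = q := by
    intro p q hp hq h
    exact hinj (by simpa using hp) (by simpa using hq) h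
  have hsurj' : ∀ v, 1 ≤ v → v ≤ μ.card → ∃ p : ℕ × ℕ, p ∈ μ ∧ T p = v := by
    intro v h1 h2
    obtain ⟨p, hp, hpv⟩ := hsurj (show v ∈ Set.Icc 1 μ.card from ⟨h1, h2⟩)
    exact ⟨p, by simpa using hp, hpv⟩
  set col : ℕ → Finset ℕ := fun s => (Finset.range (μ.colLen s)).image (fun r => T (r, s))
    with hcol_def
  have hmemcol : ∀ r s, (r, s) ∈ μ → T (r, s) ∈ col s := by
    intro r s h
    exact Finset.mem_image.mpr
      ⟨r, Finset.mem_range.mpr (YoungDiagram.mem_iff_lt_colLen.mp h), rfl⟩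
  have hcolmem : ∀ {s v}, v ∈ col s → ∃ r, (r, s) ∈ μ ∧ T (r, s) = v := by
    intro s v hv
    obtain ⟨r, hr, hrv⟩ := Finset.mem_image.mp hv
    exact ⟨r, YoungDiagram.mem_iff_lt_colLen.mpr (Finset.mem_range.mp hr), hrv⟩
  have hcard : ∀ s, (col s).card = μ.colLen s := by
    intro s
    rw [hcol_def]
    rw [Finset.card_image_of_injOn, Finset.card_range]
    intro r1 h1 r2 h2 h
    have := hinj' (r1, s) (r2, s)
      (YoungDiagram.mem_iff_lt_colLen.mpr (Finset.mem_range.mp (by simpa using h1)))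
      (YoungDiagram.mem_iff_lt_colLen.mpr (Finset.mem_range.mp (by simpa using h2))) h
    exact congrArg Prod.fst this
  have key : ∀ s, col s = Finset.Ioc (∑ t ∈ Finset.range s, μ.colLen t)
      (∑ t ∈ Finset.range (s + 1), μ.colLen t) := by
    intro s
    induction s using Nat.strong_induction_on with
    | _ s IH =>
      match s, IH with
      | 0, _ =>
        apply Finset.Subset.antisymm
        · intro v hv
          obtain ⟨r, hr, hrv⟩ := hcolmem hv
          have h1 := ha.1 r hr
          rw [hrv, Finset.mem_Icc] at h1
          rw [Finset.mem_Ioc, Finset.sum_range_zero, Finset.sum_range_one]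
          omega
        · intro v hv
          rw [Finset.mem_Ioc, Finset.sum_range_zero, Finset.sum_range_one] at hv
          obtain ⟨r, hr, hrv⟩ := ha.2 v (Finset.mem_Icc.mpr (by omega))
          rw [← hrv]
          exact hmemcol r 0 hr
      | s + 1, IH =>
        -- Step A: lower bound for entries of column s+1
        have stepA : ∀ v ∈ col (s + 1), (∑ t ∈ Finset.range (s + 1), μ.colLen t) < v := by
          intro v hv
          obtain ⟨r, hr, hrv⟩ := hcolmem hv
          by_contra hle
          push_neg at hle
          have hv1 : 1 ≤ v := by rw [← hrv]; exact (hmem _ hr).1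
          obtain ⟨t, ht, h1, h2⟩ := aux_locate μ.colLen (s + 1) v (by omega) hle
          have hvt : v ∈ col t := by
            rw [IH t ht]
            exact Finset.mem_Ioc.mpr ⟨h1, h2⟩
          obtain ⟨r', hr', hrv'⟩ := hcolmem hvt
          have heq := hinj' (r', t) (r, s + 1) hr' hr (hrv'.trans hrv.symm)
          have : t = s + 1 := congrArg Prod.snd heq
          omega
        -- the set of values in columns 1..s+1
        set S' : Finset ℕ := (Finset.range (s + 1)).biUnion (fun t => col (t + 1)) with hS'def
        have hA1 : ∀ v ∈ S', μ.colLen 0 < v ∧ v ≤ μ.card := by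
          intro v hv
          obtain ⟨t, ht, hvt⟩ := Finset.mem_biUnion.mp hv
          obtain ⟨r, hr, hrv⟩ := hcolmem hvt
          have h2 := hmem _ hr
          rw [hrv] at h2
          refine ⟨?_, h2.2⟩
          by_contra hle
          push_neg at hle
          have hv0 : v ∈ col 0 := by
            rw [IH 0 (Nat.succ_pos s), Finset.mem_Ioc, Finset.sum_range_zero,
              Finset.sum_range_one]
            omega
          obtain ⟨r', hr', hrv'⟩ := hcolmem hv0
          have heq := hinj' (r', 0) (r, t + 1) hr' hr (hrv'.trans hrv.symm)
          exact Nat.succ_ne_zero t (congrArg Prod.snd heq).symm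
        -- downward closedness of S' within Ioc (colLen 0) card
        have hDC : ∀ v ∈ S', ∀ w, μ.colLen 0 < w → w ≤ v → w ∈ S' := by
          intro v hv w hw1 hw2
          rcases eq_or_lt_of_le hw2 with rfl | hwv
          · exact hv
          obtain ⟨c, hc, hvcol⟩ := Finset.mem_biUnion.mp hv
          have hc' : c ≤ s := by have := Finset.mem_range.mp hc; omega
          obtain ⟨r, hr, hrv⟩ := hcolmem hvcol
          have hrc : (r, c) ∈ μ := μ.up_left_mem le_rfl (Nat.le_succ c) hr
          have hwn : w ≤ μ.card := le_trans hw2 (hA1 v hv).2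
          obtain ⟨⟨r₂, c₂⟩, hp2, hp2v⟩ := hsurj' w (by omega) hwn
          have hc₂ : c₂ ≠ 0 := by
            rintro rfl
            have hcl := ha.1 r₂ hp2
            rw [hp2v, Finset.mem_Icc] at hcl
            omega
          obtain ⟨c₂', rfl⟩ : ∃ c', c₂ = c' + 1 := ⟨c₂ - 1, by omega⟩
          have hp2' : (r₂, c₂') ∈ μ := μ.up_left_mem le_rfl (Nat.le_succ c₂') hp2
          have hadj1 : Adjacent μ T (T (r, c)) v := ⟨r, c, hrc, hr, rfl, hrv⟩
          have hadj2 : Adjacent μ T (T (r₂, c₂')) w := ⟨r₂, c₂', hp2', hp2, rfl, hp2v⟩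
          have hlt : T (r₂, c₂') < T (r, c) := (hb _ _ _ _ hadj2 hadj1).mpr hwv
          have hloc1 : T (r, c) ≤ ∑ t ∈ Finset.range (s + 1), μ.colLen t := by
            have hcc : T (r, c) ∈ col c := hmemcol r c hrc
            rw [IH c (by omega), Finset.mem_Ioc] at hcc
            calc T (r, c) ≤ ∑ t ∈ Finset.range (c + 1), μ.colLen t := hcc.2
              _ ≤ _ := Finset.sum_le_sum_of_subset (Finset.range_subset_range.mpr (by omega))
          have h1u : 1 ≤ T (r₂, c₂') := (hmem _ hp2').1
          obtain ⟨t, ht, hl1, hl2⟩ :=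
            aux_locate μ.colLen (s + 1) (T (r₂, c₂')) (by omega) (by omega)
          have hut : T (r₂, c₂') ∈ col t := by
            rw [IH t ht]
            exact Finset.mem_Ioc.mpr ⟨hl1, hl2⟩
          obtain ⟨r₃, hr₃, hr₃v⟩ := hcolmem hut
          have heq := hinj' (r₃, t) (r₂, c₂') hr₃ hp2' hr₃v
          have hct : t = c₂' := congrArg Prod.snd heq
          have hwcol : w ∈ col (c₂' + 1) := hp2v ▸ hmemcol r₂ (c₂' + 1) hp2
          exact Finset.mem_biUnion.mpr ⟨c₂', Finset.mem_range.mpr (by omega), hwcol⟩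
        -- cardinality of S'
        have hdisj : ∀ t1 ∈ Finset.range (s + 1), ∀ t2 ∈ Finset.range (s + 1), t1 ≠ t2 →
            Disjoint (col (t1 + 1)) (col (t2 + 1)) := by
          intro t1 _ t2 _ hne
          rw [Finset.disjoint_left]
          intro v h1 h2
          obtain ⟨ra, hra, hva⟩ := hcolmem h1
          obtain ⟨rb, hrb, hvb⟩ := hcolmem h2
          have heq := hinj' _ _ hra hrb (hva.trans hvb.symm)
          have : t1 + 1 = t2 + 1 := congrArg Prod.snd heq
          exact hne (by omega)
        have hScard : S'.card + μ.colLen 0 = ∑ t ∈ Finset.range (s + 1 + 1), μ.colLen t := by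
          rw [hS'def, Finset.card_biUnion hdisj,
            Finset.sum_range_succ' (fun t => μ.colLen t) (s + 1)]
          congr 1
          exact Finset.sum_congr rfl (fun t _ => hcard (t + 1))
        have hS' : S' = Finset.Ioc (μ.colLen 0) (∑ t ∈ Finset.range (s + 1 + 1), μ.colLen t) := by
          have h := aux_initial S' (μ.colLen 0) μ.card
            (fun v hv => Finset.mem_Ioc.mpr (hA1 v hv)) hDC
          rw [h]
          congr 1
          omega
        -- conclude
        have hsub : col (s + 1) ⊆ Finset.Ioc (∑ t ∈ Finset.range (s + 1), μ.colLen t)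
            (∑ t ∈ Finset.range (s + 1 + 1), μ.colLen t) := by
          intro v hv
          rw [Finset.mem_Ioc]
          refine ⟨stepA v hv, ?_⟩
          have hvS : v ∈ S' :=
            Finset.mem_biUnion.mpr ⟨s, Finset.mem_range.mpr (by omega), hv⟩
          rw [hS', Finset.mem_Ioc] at hvS
          exact hvS.2
        apply Finset.eq_of_subset_of_card_le hsub
        rw [hcard, Nat.card_Ioc, Finset.sum_range_succ]
        omega
  constructor
  · intro r s hrs
    have := hmemcol r s hrs
    rwa [key s] at this
  · intro s v hv
    have hvc : v ∈ col s := by rw [key s]; exact hv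
    exact hcolmem hvc
end

section
/- Let T and T' be two fillings of a Young diagram λ produced by the column-by-column algorithm (first column filled arbitrarily with {1,...,μ₁}, then each subsequent column s filled with the next μ_s consecutive integers in the row order determined by the first column). Then the adjacent-pair matrices satisfy N_T = N_{T'} if and only if T' is obtained from T by a sequence of row swaps, i.e., interchanges of the entire contents of pairs of equal-length rows. -/
/-- `T` is a filling produced by the column-by-column algorithm: the first column is
filled (arbitrarily) with `{1, ..., μ₁}` and, more generally, the `s`-th column is filled
with the next `μ_s` consecutive integers, placed in the row order determined by the
first column. -/
def IsAlgFilling (μ : YoungDiagram) (T : ℕ × ℕ → ℕ) : Prop :=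
  IsFilling μ T ∧
    (∀ r s, (r, s) ∈ μ →
      T (r, s) ∈ Finset.Ioc (∑ t ∈ Finset.range s, μ.colLen t)
        (∑ t ∈ Finset.range (s + 1), μ.colLen t)) ∧
    ∀ r r' s, (r, s) ∈ μ → (r', s) ∈ μ → (T (r, s) < T (r', s) ↔ T (r, 0) < T (r', 0))

/-- `T'` is obtained from `T` by a sequence of row swaps, i.e. by permuting rows of
equal lengths. -/
def RowSwapEquiv (μ : YoungDiagram) (T T' : ℕ × ℕ → ℕ) : Prop :=
  ∃ ρ : Equiv.Perm ℕ, (∀ r, μ.rowLen (ρ r) = μ.rowLen r) ∧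
    ∀ r s, (r, s) ∈ μ → T' (r, s) = T (ρ r, s)

/-- The first column of an algorithmic filling is a bijection onto `{1, ..., μ₁}`. -/
lemma col0_bijOn {μ : YoungDiagram} {T : ℕ × ℕ → ℕ} (hT : IsAlgFilling μ T) :
    Set.BijOn (fun r => T (r, 0)) {r | (r, 0) ∈ μ} (Set.Ioc 0 (μ.colLen 0)) := by
  obtain ⟨hfill, hcol, -⟩ := hT
  have hmaps : Set.MapsTo (fun r => T (r, 0)) {r | (r, 0) ∈ μ} (Set.Ioc 0 (μ.colLen 0)) := by
    intro r hr
    have := hcol r 0 hr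
    simpa using this
  have hinj : Set.InjOn (fun r => T (r, 0)) {r | (r, 0) ∈ μ} := by
    intro a ha b hb hab
    have := hfill.injOn (by simpa [YoungDiagram.mem_cells] using ha)
      (by simpa [YoungDiagram.mem_cells] using hb) hab
    exact congrArg Prod.fst this
  refine ⟨hmaps, hinj, ?_⟩
  -- surjectivity by counting
  have hset : {r | (r, 0) ∈ μ} = ↑(Finset.range (μ.colLen 0)) := by
    ext r; simp [YoungDiagram.mem_iff_lt_colLen]
  have himg : (Finset.range (μ.colLen 0)).image (fun r => T (r, 0))
      = Finset.Ioc 0 (μ.colLen 0) := by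
    apply Finset.eq_of_subset_of_card_le
    · intro v hv
      simp only [Finset.mem_image] at hv
      obtain ⟨r, hr, rfl⟩ := hv
      have : r ∈ {r | (r, 0) ∈ μ} := by rw [hset]; exact_mod_cast hr
      simpa using hmaps this
    · have hinj' : Set.InjOn (fun r => T (r, 0)) ↑(Finset.range (μ.colLen 0)) := by
        rw [← hset]; exact hinj
      rw [Finset.card_image_of_injOn hinj', Finset.card_range, Nat.card_Ioc]
      omega
  intro v hv
  have : v ∈ (Finset.range (μ.colLen 0)).image (fun r => T (r, 0)) := by
    rw [himg]; simpa using hv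
  simp only [Finset.mem_image] at this
  obtain ⟨r, hr, hrv⟩ := this
  exact ⟨r, by rw [hset]; exact_mod_cast hr, hrv⟩

/-- In a filling, the right neighbour of the value at `(r, s)` is uniquely determined. -/
lemma right_nbr {μ : YoungDiagram} {T : ℕ × ℕ → ℕ} (hT : IsAlgFilling μ T)
    {r s : ℕ} (h : (r, s) ∈ μ) (j : ℕ) :
    Adjacent μ T (T (r, s)) j ↔ (r, s + 1) ∈ μ ∧ j = T (r, s + 1) := by
  constructor
  · rintro ⟨r', c, h1, h2, h3, rfl⟩
    have : (r', c) = (r, s) := hT.1.injOn (by simpa [YoungDiagram.mem_cells] using h1)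
      (by simpa [YoungDiagram.mem_cells] using h) h3
    obtain ⟨rfl, rfl⟩ := Prod.mk.injEq .. ▸ this
    exact ⟨h2, rfl⟩
  · rintro ⟨h2, rfl⟩
    exact ⟨r, s, h, h2, rfl, rfl⟩

/-- Equality of adjacent-pair matrices transfers adjacency. -/
lemma adj_of_matrix_eq {μ : YoungDiagram} {T T' : ℕ × ℕ → ℕ}
    (hT : IsAlgFilling μ T)
    (hN : adjPairMatrix μ T = adjPairMatrix μ T') {i j : ℕ}
    (h : Adjacent μ T i j) : Adjacent μ T' i j := by
  obtain ⟨r, c, h1, h2, rfl, rfl⟩ := h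
  have hi : T (r, c) ∈ Set.Icc 1 μ.card :=
    hT.1.mapsTo (by simpa [YoungDiagram.mem_cells] using h1)
  have hj : T (r, c + 1) ∈ Set.Icc 1 μ.card :=
    hT.1.mapsTo (by simpa [YoungDiagram.mem_cells] using h2)
  simp only [Set.mem_Icc] at hi hj
  have hilt : T (r, c) - 1 < μ.card := by omega
  have hjlt : T (r, c + 1) - 1 < μ.card := by omega
  have := congrFun (congrFun hN ⟨T (r, c) - 1, hilt⟩) ⟨T (r, c + 1) - 1, hjlt⟩
  simp only [adjPairMatrix, Matrix.of_apply] at this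
  have hi1 : T (r, c) - 1 + 1 = T (r, c) := by omega
  have hj1 : T (r, c + 1) - 1 + 1 = T (r, c + 1) := by omega
  rw [hi1, hj1] at this
  rw [if_pos ⟨r, c, h1, h2, rfl, rfl⟩] at this
  by_contra hcon
  rw [if_neg hcon] at this
  norm_num at this

/-- for two fillings `T`, `T'` of `μ` produced by the column-by-column
algorithm, the adjacent-pair matrices satisfy `N_T = N_{T'}` iff `T'` is obtained from
`T` by a sequence of row swaps (interchanges of full contents of equal-length rows). -/
theorem stmt6 (μ : YoungDiagram) (T T' : ℕ × ℕ → ℕ)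
    (hT : IsAlgFilling μ T) (hT' : IsAlgFilling μ T') :
    adjPairMatrix μ T = adjPairMatrix μ T' ↔ RowSwapEquiv μ T T' := by
  classical
  constructor
  · intro hN
    have hAdj : ∀ i j, Adjacent μ T i j ↔ Adjacent μ T' i j := fun i j =>
      ⟨adj_of_matrix_eq hT hN, adj_of_matrix_eq hT' hN.symm⟩
    -- build the permutation from the first columns
    set p : ℕ → Prop := fun r => (r, 0) ∈ μ with hp
    let eT := (col0_bijOn hT).equiv _
    let eT' := (col0_bijOn hT').equiv _
    let e : Equiv.Perm {r // p r} := eT'.trans eT.symm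
    let ρ : Equiv.Perm ℕ := e.subtypeCongr (Equiv.refl _)
    have hcoeT : ∀ x : {r | (r, 0) ∈ μ}, (eT x : ℕ) = T ((x : ℕ), 0) := fun x => rfl
    have hcoeT' : ∀ x : {r | (r, 0) ∈ μ}, (eT' x : ℕ) = T' ((x : ℕ), 0) := fun x => rfl
    have h1 : ∀ r (h : (r, 0) ∈ μ), (ρ r, 0) ∈ μ ∧ T (ρ r, 0) = T' (r, 0) := by
      intro r h
      have hρ : ρ r = (e ⟨r, h⟩ : ℕ) :=
        Equiv.Perm.subtypeCongr.left_apply e (Equiv.refl _) (show p r from h)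
      have hmem : ((e ⟨r, h⟩ : ℕ), 0) ∈ μ := (e ⟨r, h⟩).2
      refine ⟨by rw [hρ]; exact hmem, ?_⟩
      rw [hρ]
      have : eT (e ⟨r, h⟩) = eT' ⟨r, h⟩ := by
        show eT (eT.symm (eT' ⟨r, h⟩)) = eT' ⟨r, h⟩
        exact eT.apply_symm_apply _
      have := congrArg (Subtype.val) this
      rw [hcoeT, hcoeT'] at this
      exact this
    have h2 : ∀ r, ¬(r, 0) ∈ μ → ρ r = r := by
      intro r h
      have : ρ r = ((Equiv.refl {a // ¬ p a}) ⟨r, h⟩ : ℕ) :=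
        Equiv.Perm.subtypeCongr.right_apply e (Equiv.refl _) (show ¬ p r from h)
      simpa using this
    have main : ∀ s r, ((r, s) ∈ μ ↔ (ρ r, s) ∈ μ) ∧
        ((r, s) ∈ μ → T' (r, s) = T (ρ r, s)) := by
      intro s
      induction s with
      | zero =>
        intro r
        constructor
        · by_cases h : (r, 0) ∈ μ
          · exact ⟨fun _ => (h1 r h).1, fun _ => h⟩
          · rw [h2 r h]
        · intro h
          exact ((h1 r h).2).symm
      | succ s ih =>
        intro r
        have fwd : (r, s + 1) ∈ μ → (ρ r, s + 1) ∈ μ ∧ T' (r, s + 1) = T (ρ r, s + 1) := by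
          intro hm
          have hs : (r, s) ∈ μ := μ.up_left_mem le_rfl (Nat.le_succ s) hm
          have hρs : (ρ r, s) ∈ μ := (ih r).1.mp hs
          have hTeq := (ih r).2 hs
          have hadj : Adjacent μ T' (T' (r, s)) (T' (r, s + 1)) := ⟨r, s, hs, hm, rfl, rfl⟩
          rw [hTeq] at hadj
          have hadj2 : Adjacent μ T (T (ρ r, s)) (T' (r, s + 1)) := (hAdj _ _).mpr hadj
          exact (right_nbr hT hρs _).mp hadj2
        refine ⟨⟨fun h => (fwd h).1, ?_⟩, fun h => (fwd h).2⟩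
        intro hm
        have hρs : (ρ r, s) ∈ μ := μ.up_left_mem le_rfl (Nat.le_succ s) hm
        have hs : (r, s) ∈ μ := (ih r).1.mpr hρs
        have hTeq := (ih r).2 hs
        have hadj : Adjacent μ T (T (ρ r, s)) (T (ρ r, s + 1)) := ⟨ρ r, s, hρs, hm, rfl, rfl⟩
        rw [← hTeq] at hadj
        have hadj2 : Adjacent μ T' (T' (r, s)) (T (ρ r, s + 1)) := (hAdj _ _).mp hadj
        exact ((right_nbr hT' hs _).mp hadj2).1
    refine ⟨ρ, ?_, fun r s h => (main s r).2 h⟩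
    intro r
    have key : ∀ s : ℕ, s < μ.rowLen (ρ r) ↔ s < μ.rowLen r := by
      intro s
      rw [← YoungDiagram.mem_iff_lt_rowLen, ← YoungDiagram.mem_iff_lt_rowLen]
      exact ((main s r).1).symm
    have a := key (μ.rowLen r)
    have b := key (μ.rowLen (ρ r))
    omega
  · rintro ⟨ρ, hlen, heq⟩
    have hmem : ∀ r c, (r, c) ∈ μ ↔ (ρ r, c) ∈ μ := by
      intro r c
      rw [YoungDiagram.mem_iff_lt_rowLen, YoungDiagram.mem_iff_lt_rowLen, hlen r]
    have hiff : ∀ i j, Adjacent μ T (i : ℕ) j ↔ Adjacent μ T' i j := by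
      intro i j
      constructor
      · rintro ⟨r, c, h1, h2, rfl, rfl⟩
        refine ⟨ρ.symm r, c, ?_, ?_, ?_, ?_⟩
        · rw [hmem, ρ.apply_symm_apply]; exact h1
        · rw [hmem, ρ.apply_symm_apply]; exact h2
        · rw [heq _ _ (by rw [hmem, ρ.apply_symm_apply]; exact h1), ρ.apply_symm_apply]
        · rw [heq _ _ (by rw [hmem, ρ.apply_symm_apply]; exact h2), ρ.apply_symm_apply]
      · rintro ⟨r, c, h1, h2, h3, h4⟩
        exact ⟨ρ r, c, (hmem r c).mp h1, (hmem r (c + 1)).mp h2,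
          by rw [← heq r c h1]; exact h3, by rw [← heq r (c + 1) h2]; exact h4⟩
    ext i j
    simp only [adjPairMatrix, Matrix.of_apply]
    exact if_congr (hiff _ _) rfl rfl
end
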